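/- (Theorem 4, uniqueness) Let 0 < α < β and M ≥ 1 and let g_M(λ) = T_M((2λ − (β+α))/(β−α)) where T_M is the M-th Chebyshev polynomial of the first kind. If p is a real polynomial of degree at most M with p(0) = 1 and max_{λ ∈ [α, β]} |p(λ)| = 1/|g_M(0)|, then p(λ) = g_M(λ)/g_M(0) for all λ. -/

import Mathlib

open Polynomial Real

lemma cheb_natDegree_le (n : ℕ) : (Chebyshev.T ℝ (n : ℤ)).natDegree ≤ n ∧
    (Chebyshev.T ℝ ((n : ℤ) + 1)).natDegree ≤ n + 1 := by
  induction n with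
  | zero => simp [Chebyshev.T_zero, Chebyshev.T_one]
  | succ n ih =>
    obtain ⟨h1, h2⟩ := ih
    refine ⟨by exact_mod_cast h2, ?_⟩
    have hcast : ((n + 1 : ℕ) : ℤ) + 1 = (n : ℤ) + 2 := by push_cast; ring
    rw [hcast, Chebyshev.T_add_two]
    refine le_trans (natDegree_sub_le _ _) ?_
    simp only [max_le_iff]
    constructor
    · refine le_trans (natDegree_mul_le) ?_
      have : (2 * X : ℝ[X]).natDegree ≤ 1 := by
        refine le_trans natDegree_mul_le ?_; simp
      omega
    · omega

lemma cheb_neg_arg (n : ℕ) {x : ℝ} (hx : x ≤ -1) :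
    1 ≤ (-1) ^ n * (Chebyshev.T ℝ (n : ℤ)).eval x ∧
    (-1) ^ n * (Chebyshev.T ℝ (n : ℤ)).eval x ≤
      (-1) ^ (n + 1) * (Chebyshev.T ℝ ((n : ℤ) + 1)).eval x := by
  induction n with
  | zero => simp [Chebyshev.T_zero, Chebyshev.T_one]; linarith
  | succ n ih =>
    obtain ⟨h1, h2⟩ := ih
    have key : ((n : ℤ) + 1) + 1 = (n : ℤ) + 2 := by ring
    have hrec := Chebyshev.T_add_two ℝ (n : ℤ)
    have hrec' : (Chebyshev.T ℝ ((n : ℤ) + 2)).eval x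
        = 2 * x * (Chebyshev.T ℝ ((n : ℤ) + 1)).eval x - (Chebyshev.T ℝ (n : ℤ)).eval x := by
      rw [hrec]; simp
    constructor
    · exact le_trans h1 h2
    · have hc : ((n + 1 : ℕ) : ℤ) + 1 = (n : ℤ) + 2 := by push_cast; ring
      rw [hc, hrec']
      have e1 : ((n+1:ℕ):ℤ) = (n:ℤ)+1 := by push_cast; ring
      rw [e1]
      set A := (Chebyshev.T ℝ ((n : ℤ) + 1)).eval x with hA
      set B := (Chebyshev.T ℝ (n : ℤ)).eval x with hB
      have hA1 : 1 ≤ (-1)^(n+1) * A := le_trans h1 h2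
      have expand : (-1:ℝ)^(n+1+1) * (2*x*A - B) = 2*(-x)*((-1)^(n+1)*A) - (-1)^n*B := by ring
      rw [expand]
      have h2u : 2*((-1:ℝ)^(n+1)*A) ≤ 2*(-x)*((-1)^(n+1)*A) := by nlinarith
      linarith

set_option maxHeartbeats 1000000 in
theorem stmt_16 (α β : ℝ) (hα : 0 < α) (hαβ : α < β) (M : ℕ) (hM : 1 ≤ M)
    (p : Polynomial ℝ) (hdeg : p.natDegree ≤ M) (hp0 : p.eval 0 = 1)
    (hbound : ∀ x ∈ Set.Icc α β, |p.eval x| ≤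
      1 / |(Polynomial.Chebyshev.T ℝ (M : ℤ)).eval (-(β + α) / (β - α))|)
    (hattain : ∃ x ∈ Set.Icc α β, |p.eval x| =
      1 / |(Polynomial.Chebyshev.T ℝ (M : ℤ)).eval (-(β + α) / (β - α))|) :
    ∀ x : ℝ, p.eval x =
      (Polynomial.Chebyshev.T ℝ (M : ℤ)).eval ((2 * x - (β + α)) / (β - α)) /
        (Polynomial.Chebyshev.T ℝ (M : ℤ)).eval (-(β + α) / (β - α)) := by
  have hβα : (0:ℝ) < β - α := by linarith
  set T : ℝ[X] := Polynomial.Chebyshev.T ℝ (M : ℤ) with hT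
  set t0 : ℝ := -(β + α) / (β - α) with ht0def
  set g0 : ℝ := T.eval t0 with hg0def
  have ht0 : t0 ≤ -1 := by
    rw [ht0def, div_le_iff₀ hβα]; linarith
  have hg0abs : 1 ≤ |g0| := by
    have := (cheb_neg_arg M ht0).1
    calc (1:ℝ) ≤ (-1)^M * g0 := this
    _ ≤ |(-1)^M * g0| := le_abs_self _
    _ = |g0| := by rw [abs_mul, abs_pow, abs_neg, abs_one, one_pow, one_mul]
  have hg0ne : g0 ≠ 0 := by intro h; rw [h] at hg0abs; simp at hg0abs; linarith
  -- the affine map and composed polynomial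
  set A : ℝ[X] := C (2 / (β - α)) * X + C (-(β + α) / (β - α)) with hAdef
  have hAeval : ∀ x : ℝ, A.eval x = (2 * x - (β + α)) / (β - α) := by
    intro x; rw [hAdef]; simp; field_simp; ring
  set G : ℝ[X] := T.comp A with hGdef
  have hGeval : ∀ x : ℝ, G.eval x = T.eval ((2 * x - (β + α)) / (β - α)) := by
    intro x; rw [hGdef, eval_comp, hAeval]
  have hG0 : G.eval 0 = g0 := by
    rw [hGeval, hg0def, ht0def]; norm_num
  -- the difference polynomial
  set q : ℝ[X] := C g0⁻¹ * G - p with hqdef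
  have hqdeg : q.natDegree ≤ M := by
    refine le_trans (natDegree_sub_le _ _) ?_
    simp only [max_le_iff]
    refine ⟨le_trans (natDegree_C_mul_le _ _) ?_, hdeg⟩
    rw [hGdef, natDegree_comp]
    have hTdeg : T.natDegree ≤ M := (cheb_natDegree_le M).1
    have hAdeg : A.natDegree ≤ 1 := by
      rw [hAdef, natDegree_linear]
      positivity
    nlinarith
  have hq0 : q.eval 0 = 0 := by
    rw [hqdef]; simp [hG0, hp0]
    field_simp
    norm_num
  -- nodes
  set v : ℕ → ℝ := fun k => (β + α) / 2 + (β - α) / 2 * Real.cos (k * π / M) with hvdef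
  set s : Finset ℕ := Finset.range (M + 1) with hsdef
  have hMpos : (0:ℝ) < M := by exact_mod_cast hM
  have hangle : ∀ k : ℕ, k ∈ s → 0 ≤ (k:ℝ) * π / M ∧ (k:ℝ) * π / M ≤ π := by
    intro k hk
    rw [hsdef, Finset.mem_range] at hk
    have hk' : (k:ℝ) ≤ M := by exact_mod_cast Nat.lt_succ_iff.mp hk
    constructor
    · positivity
    · rw [div_le_iff₀ hMpos]; nlinarith [pi_pos]
  have hvmono : ∀ j k, j ∈ s → k ∈ s → j < k → v k < v j := by
    intro j k hj hk hjk
    have hcos : Real.cos ((k:ℝ) * π / M) < Real.cos ((j:ℝ) * π / M) := by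
      apply Real.cos_lt_cos_of_nonneg_of_le_pi (hangle j hj).1 (hangle k hk).2
      have hjk' : (j:ℝ) < k := by exact_mod_cast hjk
      rw [div_lt_div_iff₀ hMpos hMpos]
      exact mul_lt_mul_of_pos_right (mul_lt_mul_of_pos_right hjk' pi_pos) hMpos
    rw [hvdef]; simp only
    nlinarith
  have hinj : Set.InjOn v ↑s := by
    intro j hj k hk h
    by_contra hne
    rcases lt_or_gt_of_ne hne with h1 | h1
    · exact absurd h (ne_of_gt (hvmono j k hj hk h1))
    · exact absurd h.symm (ne_of_gt (hvmono k j hk hj h1))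
  have hvmem : ∀ k ∈ s, v k ∈ Set.Icc α β := by
    intro k hk
    have h1 := Real.neg_one_le_cos ((k:ℝ) * π / M)
    have h2 := Real.cos_le_one ((k:ℝ) * π / M)
    rw [hvdef]; constructor <;> simp only <;> nlinarith
  have hvpos : ∀ k ∈ s, 0 < v k := fun k hk => lt_of_lt_of_le hα (hvmem k hk).1
  -- values of G at nodes
  have hGv : ∀ k ∈ s, G.eval (v k) = (-1) ^ k := by
    intro k hk
    have harg : (2 * v k - (β + α)) / (β - α) = Real.cos ((k:ℝ) * π / M) := by
      rw [hvdef]; simp only; field_simp; try ring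
    rw [hGeval, harg, hT, Polynomial.Chebyshev.T_real_cos]
    have : (M:ℝ) * ((k:ℝ) * π / M) = (k:ℝ) * π := by field_simp; try ring
    push_cast
    rw [this]
    have := Real.cos_nat_mul_pi_sub 0 k
    simpa using this
  -- sign factor
  obtain ⟨σ, hσ1, hσg0⟩ : ∃ σ : ℝ, |σ| = 1 ∧ σ * g0⁻¹ = |g0|⁻¹ := by
    rcases le_or_gt 0 g0 with h | h
    · exact ⟨1, abs_one, by rw [abs_of_nonneg h, one_mul]⟩
    · exact ⟨-1, by norm_num, by rw [abs_of_neg h]; field_simp⟩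
  have hσne : σ ≠ 0 := by intro h; rw [h] at hσ1; simp at hσ1
  -- key nonnegativity
  have hkey : ∀ k ∈ s, 0 ≤ σ * (-1) ^ k * q.eval (v k) := by
    intro k hk
    have hqv : q.eval (v k) = g0⁻¹ * (-1) ^ k - p.eval (v k) := by
      rw [hqdef]; simp [hGv k hk]; try ring
    have habs1 : |σ * (-1:ℝ)^k| = 1 := by
      rw [abs_mul, hσ1, abs_pow, abs_neg, abs_one, one_pow, mul_one]
    have hb := hbound (v k) (hvmem k hk)
    have hple : σ * (-1)^k * p.eval (v k) ≤ |g0|⁻¹ := by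
      calc σ * (-1)^k * p.eval (v k) ≤ |σ * (-1)^k * p.eval (v k)| := le_abs_self _
      _ = |p.eval (v k)| := by rw [abs_mul, habs1, one_mul]
      _ ≤ 1 / |g0| := hb
      _ = |g0|⁻¹ := one_div _
    have : σ * (-1)^k * q.eval (v k) = σ * g0⁻¹ * ((-1)^k * (-1)^k) - σ * (-1)^k * p.eval (v k) := by
      rw [hqv]; ring
    rw [this, ← pow_add, Even.neg_one_pow ⟨k, rfl⟩, mul_one, hσg0]
    linarith
  -- Lagrange representation
  have hcard : q.degree < s.card := by
    rw [hsdef, Finset.card_range]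
    calc q.degree ≤ (q.natDegree : WithBot ℕ) := degree_le_natDegree
    _ ≤ (M : WithBot ℕ) := by exact_mod_cast hqdeg
    _ < ((M + 1 : ℕ) : WithBot ℕ) := by exact_mod_cast Nat.lt_succ_self M
  have hrepr : q = ∑ k ∈ s, C (q.eval (v k)) * Lagrange.basis s v k := by
    conv_lhs => rw [Lagrange.eq_interpolate hinj hcard]
    rw [Lagrange.interpolate_apply]
  -- basis values at 0
  have hBval : ∀ k ∈ s, (Lagrange.basis s v k).eval 0 =
      ∏ j ∈ s.erase k, ((v k - v j)⁻¹ * (0 - v j)) := by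
    intro k hk
    rw [Lagrange.basis, eval_prod]
    apply Finset.prod_congr rfl
    intro j hj
    rw [Lagrange.basisDivisor, eval_mul, eval_C, eval_sub, eval_X, eval_C]
  have hBsign : ∀ k ∈ s, 0 < (-1:ℝ) ^ (M - k) * (Lagrange.basis s v k).eval 0 := by
    intro k hk
    rw [hBval k hk]
    have hkM : k ≤ M := by rw [hsdef, Finset.mem_range] at hk; omega
    set f : ℕ → ℝ := fun j => (v k - v j)⁻¹ * (0 - v j) with hfdef
    have hsplit : s.erase k = Finset.range k ∪ Finset.Ico (k+1) (M+1) := by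
      ext j
      simp only [Finset.mem_erase, Finset.mem_range, Finset.mem_union, Finset.mem_Ico, hsdef]
      omega
    have hdisj : Disjoint (Finset.range k) (Finset.Ico (k+1) (M+1)) := by
      rw [Finset.disjoint_left]
      intro j hj1 hj2
      simp only [Finset.mem_range] at hj1
      simp only [Finset.mem_Ico] at hj2
      omega
    rw [hsplit, Finset.prod_union hdisj]
    have hmem_of : ∀ j, j < k ∨ (k+1 ≤ j ∧ j < M+1) → j ∈ s := by
      intro j hj; rw [hsdef, Finset.mem_range]; rcases hj with h | h <;> omega
    have hP1 : 0 < ∏ j ∈ Finset.range k, f j := by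
      apply Finset.prod_pos
      intro j hj
      simp only [Finset.mem_range] at hj
      have hjs : j ∈ s := hmem_of j (Or.inl hj)
      have h1 : v k < v j := hvmono j k hjs hk hj
      have h2 : 0 < v j := hvpos j hjs
      have : (v k - v j)⁻¹ < 0 := inv_lt_zero.mpr (by linarith)
      rw [hfdef]; simp only
      exact mul_pos_of_neg_of_neg this (by linarith)
    have hP2 : ∀ j ∈ Finset.Ico (k+1) (M+1), f j = -1 * (-(f j)) := by
      intro j hj; ring
    have hiconv : M + 1 - (k + 1) = M - k := by omega
    have hP3 : 0 < ∏ j ∈ Finset.Ico (k+1) (M+1), -f j := by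
      apply Finset.prod_pos
      intro j hj
      simp only [Finset.mem_Ico] at hj
      have hjs : j ∈ s := hmem_of j (Or.inr hj)
      have h1 : v j < v k := hvmono k j hk hjs (by omega)
      have h2 : 0 < v j := hvpos j hjs
      have hinvpos : 0 < (v k - v j)⁻¹ := inv_pos.mpr (by linarith)
      rw [hfdef]; simp only
      have : -((v k - v j)⁻¹ * (0 - v j)) = (v k - v j)⁻¹ * v j := by ring
      rw [this]
      exact mul_pos hinvpos h2
    have hsq : (-1:ℝ)^(M-k) * (-1:ℝ)^(M-k) = 1 := by
      rw [← pow_add, Even.neg_one_pow ⟨M-k, rfl⟩]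
    have hProd2 : ∏ j ∈ Finset.Ico (k+1) (M+1), f j
        = (-1:ℝ)^(M-k) * ∏ j ∈ Finset.Ico (k+1) (M+1), -f j := by
      calc ∏ j ∈ Finset.Ico (k+1) (M+1), f j
          = ∏ j ∈ Finset.Ico (k+1) (M+1), ((-1:ℝ) * (-f j)) := Finset.prod_congr rfl hP2
      _ = (∏ _j ∈ Finset.Ico (k+1) (M+1), (-1:ℝ)) * ∏ j ∈ Finset.Ico (k+1) (M+1), -f j :=
          Finset.prod_mul_distrib
      _ = (-1:ℝ)^(M-k) * ∏ j ∈ Finset.Ico (k+1) (M+1), -f j := by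
          rw [Finset.prod_const, Nat.card_Ico, hiconv]
    rw [hProd2]
    have hkey2 : (-1:ℝ)^(M-k) * ((∏ j ∈ Finset.range k, f j) *
        ((-1:ℝ)^(M-k) * ∏ j ∈ Finset.Ico (k+1) (M+1), -f j))
        = ((-1:ℝ)^(M-k) * (-1:ℝ)^(M-k)) * ((∏ j ∈ Finset.range k, f j) *
          ∏ j ∈ Finset.Ico (k+1) (M+1), -f j) := by ring
    rw [hkey2, hsq, one_mul]
    exact mul_pos hP1 hP3
  -- sum identity
  have heval0 : ∑ k ∈ s, q.eval (v k) * (Lagrange.basis s v k).eval 0 = 0 := by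
    have := congrArg (eval 0) hrepr
    rw [hq0, eval_finset_sum] at this
    simp only [eval_mul, eval_C] at this
    exact this.symm
  have hsum0 : ∑ k ∈ s, (σ * (-1)^k * q.eval (v k)) *
      ((-1:ℝ)^(M-k) * (Lagrange.basis s v k).eval 0) = 0 := by
    have hterm : ∀ k ∈ s, (σ * (-1)^k * q.eval (v k)) *
        ((-1:ℝ)^(M-k) * (Lagrange.basis s v k).eval 0)
        = (σ * (-1)^M) * (q.eval (v k) * (Lagrange.basis s v k).eval 0) := by
      intro k hk
      have hkM : k ≤ M := by rw [hsdef, Finset.mem_range] at hk; omega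
      have : (-1:ℝ)^k * (-1:ℝ)^(M-k) = (-1:ℝ)^M := by
        rw [← pow_add]; congr 1; omega
      calc (σ * (-1)^k * q.eval (v k)) * ((-1:ℝ)^(M-k) * (Lagrange.basis s v k).eval 0)
          = (σ * ((-1:ℝ)^k * (-1:ℝ)^(M-k))) * (q.eval (v k) * (Lagrange.basis s v k).eval 0) := by
            ring
      _ = (σ * (-1)^M) * (q.eval (v k) * (Lagrange.basis s v k).eval 0) := by rw [this]
    rw [Finset.sum_congr rfl hterm, ← Finset.mul_sum, heval0, mul_zero]
  have hzero : ∀ k ∈ s, q.eval (v k) = 0 := by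
    have hnn : ∀ k ∈ s, 0 ≤ (σ * (-1)^k * q.eval (v k)) *
        ((-1:ℝ)^(M-k) * (Lagrange.basis s v k).eval 0) :=
      fun k hk => mul_nonneg (hkey k hk) (le_of_lt (hBsign k hk))
    have := (Finset.sum_eq_zero_iff_of_nonneg hnn).mp hsum0
    intro k hk
    have h := this k hk
    have h2 := (hBsign k hk).ne'
    rcases mul_eq_zero.mp h with h3 | h3
    · rcases mul_eq_zero.mp h3 with h4 | h4
      · exact absurd (mul_eq_zero.mp h4) (by push_neg; exact ⟨hσne, pow_ne_zero k (by norm_num)⟩)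
      · exact h4
    · exact absurd h3 h2
  -- conclude q = 0
  have hqzero : q = 0 := by
    rw [hrepr]
    apply Finset.sum_eq_zero
    intro k hk
    rw [hzero k hk, map_zero, zero_mul]
  have hpeq : p = C g0⁻¹ * G := by
    have := sub_eq_zero.mp hqzero
    exact this.symm
  intro x
  rw [hpeq, eval_mul, eval_C, hGeval, inv_mul_eq_div]
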